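/- If D is formed by taking the disjoint union of digraphs D_1,…,D_r of orders n_1,…,n_r and adding all arcs u→v with u ∈ V(D_i), v ∈ V(D_j) and i < j, then A_D(t) = [n; n_1,…,n_r]_t · Π_{i=1}^r A_{D_i}(t), where [n; n_1,…,n_r]_t is the t-multinomial coefficient [n]_t!/([n_1]_t!⋯[n_r]_t!) and [n]_t! = Π_{k=1}^n (1+t+⋯+t^{k-1}). -/

import Mathlib

open Polynomial

/-- Number of `D`-descents of the labeling `σ`: arcs `(u,v)` with `σ u > σ v`. -/
noncomputable def desD {V : Type*} [Fintype V] (D : V → V → Prop)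
    (σ : V ≃ Fin (Fintype.card V)) : ℕ :=
  Nat.card {p : V × V // D p.1 p.2 ∧ σ p.2 < σ p.1}

/-- The Eulerian polynomial of a digraph `D`. -/
noncomputable def eulerianPoly (V : Type*) [Fintype V] [DecidableEq V]
    (D : V → V → Prop) : Polynomial ℤ :=
  ∑ σ : V ≃ Fin (Fintype.card V), X ^ desD D σ

/-- The `t`-factorial `[n]_t! = ∏_{k=1}^n (1 + t + ⋯ + t^{k-1})` as an integer polynomial. -/
noncomputable def qFact (n : ℕ) : Polynomial ℤ :=
  ∏ k ∈ Finset.range n, ∑ j ∈ Finset.range (k + 1), X ^ j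

set_option linter.unusedSectionVars false
set_option linter.unnecessarySimpa false

open Finset



/-- inversion count of a permutation of `Fin n`. -/
noncomputable def invCount {n : ℕ} (σ : Fin n ≃ Fin n) : ℕ :=
  Nat.card {q : Fin n × Fin n // q.1 < q.2 ∧ σ q.2 < σ q.1}


def insEquiv {n : ℕ} (p : Fin (n + 1)) (τ : Fin n ≃ Fin n) : Fin (n + 1) ≃ Fin (n + 1) :=
  (finSuccEquiv' p).trans (τ.optionCongr.trans (finSuccEquiv' (Fin.last n)).symm)

noncomputable def delEquiv {n : ℕ} (p : Fin (n + 1)) (σ : Fin (n + 1) ≃ Fin (n + 1)) :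
    Fin n ≃ Fin n :=
  Equiv.removeNone ((finSuccEquiv' p).symm.trans (σ.trans (finSuccEquiv' (Fin.last n))))

lemma insEquiv_at {n : ℕ} (p : Fin (n + 1)) (τ : Fin n ≃ Fin n) :
    insEquiv p τ p = Fin.last n := by
  simp [insEquiv, finSuccEquiv'_at, finSuccEquiv'_symm_none]

lemma insEquiv_succAbove {n : ℕ} (p : Fin (n + 1)) (τ : Fin n ≃ Fin n) (k : Fin n) :
    insEquiv p τ (p.succAbove k) = Fin.castSucc (τ k) := by
  simp [insEquiv, finSuccEquiv'_succAbove, finSuccEquiv'_symm_some, Fin.succAbove_last]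

lemma del_ins {n : ℕ} (p : Fin (n + 1)) (τ : Fin n ≃ Fin n) : delEquiv p (insEquiv p τ) = τ := by
  have h : (finSuccEquiv' p).symm.trans ((insEquiv p τ).trans (finSuccEquiv' (Fin.last n)))
      = τ.optionCongr := by
    ext x; simp [insEquiv]
  rw [delEquiv, h, Equiv.removeNone_optionCongr]

lemma ins_del {n : ℕ} (p : Fin (n + 1)) (σ : Fin (n + 1) ≃ Fin (n + 1))
    (hσ : σ p = Fin.last n) : insEquiv p (delEquiv p σ) = σ := by
  ext k
  rcases eq_or_ne k p with rfl | hk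
  · rw [insEquiv_at, hσ]
  · obtain ⟨a, rfl⟩ := Fin.exists_succAbove_eq hk
    rw [insEquiv_succAbove]
    have hne : σ (p.succAbove a) ≠ Fin.last n := by
      rw [← hσ]; exact fun h => (Fin.succAbove_ne p a) (σ.injective h)
    obtain ⟨b, hb⟩ := Fin.exists_succAbove_eq hne
    have h1 : ((finSuccEquiv' p).symm.trans (σ.trans (finSuccEquiv' (Fin.last n)))) (some a)
        = some b := by
      simp [finSuccEquiv'_symm_some, ← hb, finSuccEquiv'_succAbove,
        finSuccEquiv'_last_apply_castSucc]
    have h2 := Equiv.removeNone_some _ ⟨b, h1⟩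
    rw [h1] at h2
    have h3 : delEquiv p σ a = b := Option.some_injective _ h2
    rw [h3, ← hb, Fin.succAbove_last]

lemma natCard_Ioi {n : ℕ} (p : Fin (n + 1)) : Nat.card {v : Fin (n + 1) // p < v} = n - p := by
  rw [Nat.card_eq_fintype_card, Fintype.card_subtype]
  have h : (univ.filter fun v => p < v) = Finset.Ioi p := by ext v; simp
  rw [h, Fin.card_Ioi]
  omega

lemma invCount_insEquiv {n : ℕ} (p : Fin (n + 1)) (τ : Fin n ≃ Fin n) :
    invCount (insEquiv p τ) = invCount τ + (n - p) := by
  classical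
  let f : ({q : Fin n × Fin n // q.1 < q.2 ∧ τ q.2 < τ q.1} ⊕ {v : Fin (n + 1) // p < v}) →
      {q : Fin (n + 1) × Fin (n + 1) // q.1 < q.2 ∧ insEquiv p τ q.2 < insEquiv p τ q.1} :=
    Sum.elim
      (fun a => ⟨(p.succAbove a.1.1, p.succAbove a.1.2),
        Fin.succAbove_lt_succAbove_iff.mpr a.2.1, by
          rw [insEquiv_succAbove, insEquiv_succAbove]
          exact Fin.castSucc_lt_castSucc_iff.mpr a.2.2⟩)
      (fun v => ⟨(p, v.1), v.2, by
        rw [insEquiv_at]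
        have h1 : v.1 ≠ p := (ne_of_gt v.2)
        obtain ⟨b, hb⟩ := Fin.exists_succAbove_eq h1
        rw [← hb, insEquiv_succAbove]
        exact Fin.castSucc_lt_last _⟩)
  have hbij : Function.Bijective f := by
    constructor
    · rintro (⟨⟨a1, a2⟩, ha⟩ | ⟨v, hv⟩) (⟨⟨b1, b2⟩, hb⟩ | ⟨w, hw⟩) h <;>
        simp only [f, Sum.elim_inl, Sum.elim_inr, Subtype.mk.injEq, Prod.mk.injEq] at h
      · obtain ⟨h1, h2⟩ := h
        have e1 := Fin.succAbove_right_injective (p := p) h1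
        have e2 := Fin.succAbove_right_injective (p := p) h2
        subst e1; subst e2; rfl
      · exact absurd h.1 (Fin.succAbove_ne p a1)
      · exact absurd h.1 (Fin.ne_succAbove p b1)
      · obtain ⟨h1, h2⟩ := h; subst h2; rfl
    · rintro ⟨⟨u, v⟩, h1, h2⟩
      rcases eq_or_ne v p with rfl | hv
      · rw [insEquiv_at] at h2
        exact absurd h2 (Fin.not_lt.mpr (Fin.le_last _))
      rcases eq_or_ne u p with rfl | hu
      · exact ⟨Sum.inr ⟨v, h1⟩, rfl⟩
      · obtain ⟨a, ha⟩ := Fin.exists_succAbove_eq hu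
        obtain ⟨b, hb⟩ := Fin.exists_succAbove_eq hv
        refine ⟨Sum.inl ⟨(a, b), ?_, ?_⟩, ?_⟩
        · rw [← ha, ← hb] at h1; exact Fin.succAbove_lt_succAbove_iff.mp h1
        · rw [← ha, ← hb, insEquiv_succAbove, insEquiv_succAbove] at h2
          exact Fin.castSucc_lt_castSucc_iff.mp h2
        · simp only [f, Sum.elim_inl, Subtype.mk.injEq, Prod.mk.injEq]
          exact ⟨ha, hb⟩
  rw [invCount, Nat.card_congr (Equiv.ofBijective f hbij).symm, Nat.card_sum]
  rw [invCount, natCard_Ioi]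

lemma qFact_succ (n : ℕ) :
    qFact (n + 1) = qFact n * ∑ j ∈ Finset.range (n + 1), X ^ j := by
  unfold qFact; exact Finset.prod_range_succ _ n

lemma mahonian (n : ℕ) : ∑ σ : Fin n ≃ Fin n, (X : Polynomial ℤ) ^ invCount σ = qFact n := by
  induction n with
  | zero =>
    have h0 : ∀ σ : Fin 0 ≃ Fin 0, invCount σ = 0 := fun σ => by
      simp [invCount, Nat.card_eq_fintype_card]
    simp only [h0, pow_zero, Finset.sum_const, qFact, Finset.range_zero, Finset.prod_empty]
    have : Fintype.card (Fin 0 ≃ Fin 0) = 1 := by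
      rw [Fintype.card_equiv (Equiv.refl _)]; simp
    simp [Finset.card_univ, this]
  | succ n ih =>
    rw [← Finset.sum_fiberwise univ (fun σ : Fin (n + 1) ≃ Fin (n + 1) => σ.symm (Fin.last n))
      (fun σ => (X : Polynomial ℤ) ^ invCount σ)]
    have step : ∀ p : Fin (n + 1),
        (∑ σ ∈ univ.filter (fun σ : Fin (n + 1) ≃ Fin (n + 1) => σ.symm (Fin.last n) = p),
          (X : Polynomial ℤ) ^ invCount σ) = X ^ (n - (p : ℕ)) * qFact n := by
      intro p
      rw [← ih, Finset.mul_sum]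
      refine Finset.sum_nbij' (delEquiv p) (insEquiv p) (fun σ _ => mem_univ _) ?_ ?_ ?_ ?_
      · intro τ _
        simp only [mem_filter, mem_univ, true_and, Equiv.symm_apply_eq]
        rw [insEquiv_at]
      · intro σ hσ
        simp only [mem_filter, mem_univ, true_and, Equiv.symm_apply_eq] at hσ
        exact ins_del p σ hσ.symm
      · intro τ _; exact del_ins p τ
      · intro σ hσ
        simp only [mem_filter, mem_univ, true_and, Equiv.symm_apply_eq] at hσ
        conv_lhs => rw [← ins_del p σ hσ.symm, invCount_insEquiv]
        rw [pow_add, mul_comm]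
    rw [Finset.sum_congr rfl (fun p _ => step p), ← Finset.sum_mul]
    have hs : (∑ p : Fin (n + 1), (X : Polynomial ℤ) ^ (n - (p : ℕ)))
        = ∑ j ∈ Finset.range (n + 1), X ^ j := by
      rw [Fin.sum_univ_eq_sum_range (fun k => (X : Polynomial ℤ) ^ (n - k))]
      have := Finset.sum_range_reflect (fun j => (X : Polynomial ℤ) ^ j) (n + 1)
      simpa using this
    rw [hs, mul_comm, qFact_succ]




lemma natCard_sigma {ι : Type*} [Fintype ι] (β : ι → Type*) [∀ i, Finite (β i)] :
    Nat.card (Σ i, β i) = ∑ i, Nat.card (β i) := by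
  letI := fun i => Fintype.ofFinite (β i)
  simp only [Nat.card_eq_fintype_card, Fintype.card_sigma]

section Main

variable {r : ℕ} {V : Fin r → Type*} [∀ i, Fintype (V i)] [∀ i, DecidableEq (V i)]

/-- the ordinal sum relation -/
def OSrel (D : ∀ i, V i → V i → Prop) : (Σ i, V i) → (Σ i, V i) → Prop :=
  fun a b => (∃ (i : Fin r) (x y : V i), D i x y ∧ a = ⟨i, x⟩ ∧ b = ⟨i, y⟩) ∨ a.1 < b.1

/-- block pattern of a labeling -/
def projB (σ : (Σ i, V i) ≃ Fin (Fintype.card (Σ i, V i))) :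
    Fin (Fintype.card (Σ i, V i)) → Fin r :=
  fun k => (σ.symm k).1

noncomputable def crossCount {m : ℕ} (g : Fin m → Fin r) : ℕ :=
  Nat.card {q : Fin m × Fin m // g q.1 < g q.2 ∧ q.2 < q.1}

def blockEquiv (i : Fin r) : V i ≃ {a : (Σ j, V j) // a.1 = i} where
  toFun x := ⟨⟨i, x⟩, rfl⟩
  invFun a := cast (congrArg V a.2) a.1.2
  left_inv x := rfl
  right_inv := by rintro ⟨⟨j, y⟩, rfl⟩; rfl

variable (V) in
noncomputable def validG : Finset (Fin (Fintype.card (Σ i, V i)) → Fin r) :=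
  univ.filter fun g => ∀ i, Fintype.card {k // g k = i} = Fintype.card (V i)

lemma card_fiber_projB (σ : (Σ i, V i) ≃ Fin (Fintype.card (Σ i, V i))) (i : Fin r) :
    Fintype.card {k // projB σ k = i} = Fintype.card (V i) := by
  have e : {k // projB σ k = i} ≃ V i :=
    (Equiv.subtypeEquiv σ.symm (fun k => Iff.rfl)).trans (blockEquiv i).symm
  exact Fintype.card_congr e

lemma projB_mem_validG (σ : (Σ i, V i) ≃ Fin (Fintype.card (Σ i, V i))) :
    projB σ ∈ validG V := by
  simp only [validG, mem_filter, mem_univ, true_and]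
  exact card_fiber_projB σ

/-- order isomorphism enumerating the fiber of `g` over `i` -/
noncomputable def oIso (g : Fin (Fintype.card (Σ i, V i)) → Fin r) (i : Fin r)
    (h : Fintype.card {k // g k = i} = Fintype.card (V i)) :
    Fin (Fintype.card (V i)) ≃o {k // g k = i} :=
  Fintype.orderIsoFinOfCardEq _ h

noncomputable def buildσ (g : Fin (Fintype.card (Σ i, V i)) → Fin r)
    (hg : ∀ i, Fintype.card {k // g k = i} = Fintype.card (V i))
    (t : ∀ i, V i ≃ Fin (Fintype.card (V i))) : (Σ i, V i) ≃ Fin (Fintype.card (Σ i, V i)) :=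
  (Equiv.sigmaCongrRight fun i => (t i).trans (oIso g i (hg i)).toEquiv).trans
    (Equiv.sigmaFiberEquiv g)

noncomputable def tauσ (σ : (Σ i, V i) ≃ Fin (Fintype.card (Σ i, V i))) (i : Fin r) :
    V i ≃ Fin (Fintype.card (V i)) :=
  ((blockEquiv i).trans ((σ.subtypeEquiv (fun a => by simp [projB])).trans
    (oIso (projB σ) i (card_fiber_projB σ i)).toEquiv.symm))

lemma projB_buildσ (g : Fin (Fintype.card (Σ i, V i)) → Fin r)
    (hg : ∀ i, Fintype.card {k // g k = i} = Fintype.card (V i))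
    (t : ∀ i, V i ≃ Fin (Fintype.card (V i))) : projB (buildσ g hg t) = g :=
  funext fun _ => rfl

lemma buildσ_apply (g : Fin (Fintype.card (Σ i, V i)) → Fin r)
    (hg : ∀ i, Fintype.card {k // g k = i} = Fintype.card (V i))
    (t : ∀ i, V i ≃ Fin (Fintype.card (V i))) (i : Fin r) (x : V i) :
    buildσ g hg t ⟨i, x⟩ = (oIso g i (hg i) ((t i) x)).val := rfl

lemma tauσ_apply (σ : (Σ i, V i) ≃ Fin (Fintype.card (Σ i, V i))) (i : Fin r) (x : V i) :
    tauσ σ i x = (oIso (projB σ) i (card_fiber_projB σ i)).toEquiv.symm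
      ⟨σ ⟨i, x⟩, by simpa [projB] using (rfl : (⟨i, x⟩ : Σ j, V j).1 = i)⟩ := rfl

lemma tauσ_buildσ (g : Fin (Fintype.card (Σ i, V i)) → Fin r)
    (hg : ∀ i, Fintype.card {k // g k = i} = Fintype.card (V i))
    (t : ∀ i, V i ≃ Fin (Fintype.card (V i))) : tauσ (buildσ g hg t) = t := by
  funext i
  apply Equiv.ext
  intro x
  have h1 : tauσ (buildσ g hg t) i x = (oIso g i (hg i)).toEquiv.symm
      ⟨(oIso g i (hg i) ((t i) x)).val, (oIso g i (hg i) ((t i) x)).prop⟩ := rfl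
  rw [h1, Subtype.coe_eta]
  simp

lemma buildσ_tauσ (σ : (Σ i, V i) ≃ Fin (Fintype.card (Σ i, V i)))
    (g : Fin (Fintype.card (Σ i, V i)) → Fin r) (hσ : projB σ = g)
    (hg : ∀ i, Fintype.card {k // g k = i} = Fintype.card (V i)) :
    buildσ g hg (tauσ σ) = σ := by
  subst hσ
  apply Equiv.ext
  rintro ⟨i, x⟩
  rw [buildσ_apply, tauσ_apply]
  simp

lemma desD_OS (D : ∀ i, V i → V i → Prop) (σ : (Σ i, V i) ≃ Fin (Fintype.card (Σ i, V i))) :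
    desD (OSrel D) σ = (∑ i, desD (D i) (tauσ σ i)) + crossCount (projB σ) := by
  classical
  rw [desD]
  -- split into same-block and cross pairs
  let f : ({p : (Σ i, V i) × (Σ i, V i) //
        (∃ i x y, D i x y ∧ p.1 = ⟨i, x⟩ ∧ p.2 = ⟨i, y⟩) ∧ σ p.2 < σ p.1} ⊕
      {p : (Σ i, V i) × (Σ i, V i) // p.1.1 < p.2.1 ∧ σ p.2 < σ p.1}) →
      {p : (Σ i, V i) × (Σ i, V i) // OSrel D p.1 p.2 ∧ σ p.2 < σ p.1} :=
    Sum.elim (fun a => ⟨a.1, Or.inl a.2.1, a.2.2⟩) (fun a => ⟨a.1, Or.inr a.2.1, a.2.2⟩)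
  have hbij : Function.Bijective f := by
    constructor
    · rintro (⟨p, hp⟩ | ⟨p, hp⟩) (⟨q, hq⟩ | ⟨q, hq⟩) h <;>
        simp only [f, Sum.elim_inl, Sum.elim_inr, Subtype.mk.injEq] at h
      · subst h; rfl
      · subst h
        obtain ⟨i, x, y, _, h1, h2⟩ := hp.1
        rw [h1, h2] at hq
        exact absurd hq.1 (lt_irrefl i)
      · subst h
        obtain ⟨i, x, y, _, h1, h2⟩ := hq.1
        rw [h1, h2] at hp
        exact absurd hp.1 (lt_irrefl i)
      · subst h; rfl
    · rintro ⟨p, h1 | h1, h2⟩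
      exacts [⟨Sum.inl ⟨p, h1, h2⟩, rfl⟩, ⟨Sum.inr ⟨p, h1, h2⟩, rfl⟩]
  rw [Nat.card_congr (Equiv.ofBijective f hbij).symm, Nat.card_sum]
  congr 1
  · -- same-block part
    let f2 : (Σ i, {q : V i × V i // D i q.1 q.2 ∧ σ ⟨i, q.2⟩ < σ ⟨i, q.1⟩}) →
        {p : (Σ i, V i) × (Σ i, V i) //
          (∃ i x y, D i x y ∧ p.1 = ⟨i, x⟩ ∧ p.2 = ⟨i, y⟩) ∧ σ p.2 < σ p.1} :=
      fun a => ⟨(⟨a.1, a.2.1.1⟩, ⟨a.1, a.2.1.2⟩),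
        ⟨a.1, a.2.1.1, a.2.1.2, a.2.2.1, rfl, rfl⟩, a.2.2.2⟩
    have hbij2 : Function.Bijective f2 := by
      constructor
      · rintro ⟨i, ⟨x, y⟩, h⟩ ⟨j, ⟨x', y'⟩, h'⟩ hh
        simp only [f2, Subtype.mk.injEq, Prod.mk.injEq, Sigma.mk.inj_iff] at hh
        obtain ⟨⟨rfl, hx⟩, -, hy⟩ := hh
        obtain rfl := eq_of_heq hx
        obtain rfl := eq_of_heq hy
        rfl
      · rintro ⟨⟨a, b⟩, ⟨i, x, y, hD, ha, hb⟩, hlt⟩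
        obtain rfl : a = ⟨i, x⟩ := ha
        obtain rfl : b = ⟨i, y⟩ := hb
        exact ⟨⟨i, (x, y), hD, hlt⟩, rfl⟩
    rw [Nat.card_congr (Equiv.ofBijective f2 hbij2).symm, natCard_sigma]
    refine Finset.sum_congr rfl fun i _ => ?_
    rw [desD]
    refine Nat.card_congr (Equiv.subtypeEquivRight fun q => ?_)
    have hlt : tauσ σ i q.2 < tauσ σ i q.1 ↔ σ ⟨i, q.2⟩ < σ ⟨i, q.1⟩ := by
      rw [tauσ_apply, tauσ_apply]
      exact Iff.trans
        (OrderIso.lt_iff_lt (oIso (projB σ) i (card_fiber_projB σ i)).symm) Subtype.mk_lt_mk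
    rw [and_congr_right_iff]
    intro _
    exact hlt.symm
  · -- cross part
    have e3 : {p : (Σ i, V i) × (Σ i, V i) // p.1.1 < p.2.1 ∧ σ p.2 < σ p.1} ≃
        {q : Fin (Fintype.card (Σ i, V i)) × Fin (Fintype.card (Σ i, V i)) //
          projB σ q.1 < projB σ q.2 ∧ q.2 < q.1} :=
      Equiv.subtypeEquiv (σ.prodCongr σ) (fun p => by simp [projB])
    rw [crossCount, Nat.card_congr e3]
lemma euler_OS (D : ∀ i, V i → V i → Prop) :
    eulerianPoly (Σ i, V i) (OSrel D) =
      (∑ g ∈ validG V, (X : Polynomial ℤ) ^ crossCount g) *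
        ∏ i, eulerianPoly (V i) (D i) := by
  classical
  rw [eulerianPoly,
    ← Finset.sum_fiberwise_of_maps_to (fun σ _ => projB_mem_validG σ)
      (fun σ => (X : Polynomial ℤ) ^ desD (OSrel D) σ), Finset.sum_mul]
  refine Finset.sum_congr rfl fun g hgmem => ?_
  have hg : ∀ i, Fintype.card {k // g k = i} = Fintype.card (V i) := by
    simpa [validG] using hgmem
  have hprod : ∏ i, eulerianPoly (V i) (D i)
      = ∑ t : ∀ i, V i ≃ Fin (Fintype.card (V i)), ∏ i, (X : Polynomial ℤ) ^ desD (D i) (t i) := by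
    simp only [eulerianPoly]
    exact Fintype.prod_sum _
  rw [hprod, Finset.mul_sum]
  refine Finset.sum_nbij' tauσ (buildσ g hg) (fun σ _ => mem_univ _) ?_ ?_ ?_ ?_
  · intro t _
    simp [mem_filter, projB_buildσ]
  · intro σ hσ
    exact buildσ_tauσ σ g (by simpa using hσ) hg
  · intro t _
    exact tauσ_buildσ g hg t
  · intro σ hσ
    have hpσ : projB σ = g := by simpa using hσ
    rw [desD_OS, pow_add, hpσ, mul_comm]
    congr 1
    rw [← Finset.prod_pow_eq_pow_sum]
end Main

lemma euler_linear {W : Type*} [Fintype W] [DecidableEq W] (R : W → W → Prop)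
    (w : W ≃ Fin (Fintype.card W)) (hw : ∀ a b, R a b ↔ w a < w b) :
    eulerianPoly W R = qFact (Fintype.card W) := by
  rw [eulerianPoly, ← mahonian (Fintype.card W)]
  refine Fintype.sum_equiv (Equiv.equivCongr w (Equiv.refl _)) _ _ fun σ => ?_
  congr 1
  rw [desD, invCount]
  refine Nat.card_congr (Equiv.subtypeEquiv (w.prodCongr w) fun p => ?_)
  simp [hw, Equiv.equivCongr]


theorem stmt3 {r : ℕ} (V : Fin r → Type*) [∀ i, Fintype (V i)] [∀ i, DecidableEq (V i)]
    (D : ∀ i, V i → V i → Prop) (hloop : ∀ i x, ¬ D i x x) :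
    eulerianPoly (Σ i, V i)
        (fun a b => (∃ (i : Fin r) (x y : V i), D i x y ∧ a = ⟨i, x⟩ ∧ b = ⟨i, y⟩)
          ∨ a.1 < b.1) *
      ∏ i, qFact (Fintype.card (V i)) =
    qFact (Fintype.card (Σ i, V i)) * ∏ i, eulerianPoly (V i) (D i) := by
  classical
  set e : ∀ i, V i ≃ Fin (Fintype.card (V i)) := fun i => Fintype.equivFin (V i) with he
  set chain : ∀ i, V i → V i → Prop := fun i x y => e i x < e i y with hchain
  have hA : ∀ i, eulerianPoly (V i) (chain i) = qFact (Fintype.card (V i)) :=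
    fun i => euler_linear _ (e i) (fun a b => Iff.rfl)
  have tri : ∀ a b : Σ i, V i, OSrel chain a b ∨ a = b ∨ OSrel chain b a := by
    rintro ⟨i, x⟩ ⟨j, y⟩
    rcases lt_trichotomy i j with h | rfl | h
    · exact Or.inl (Or.inr h)
    · rcases lt_trichotomy (e i x) (e i y) with h | h | h
      · exact Or.inl (Or.inl ⟨i, x, y, h, rfl, rfl⟩)
      · obtain rfl : x = y := (e i).injective h
        exact Or.inr (Or.inl rfl)
      · exact Or.inr (Or.inr (Or.inl ⟨i, y, x, h, rfl, rfl⟩))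
    · exact Or.inr (Or.inr (Or.inr h))
  have irr : ∀ a : Σ i, V i, ¬ OSrel chain a a := by
    rintro ⟨i, x⟩ (⟨j, u, v, hD, h1, h2⟩ | h)
    · obtain ⟨-, huv⟩ := Sigma.mk.inj_iff.mp (h1.symm.trans h2)
      obtain rfl := eq_of_heq huv
      exact lt_irrefl _ hD
    · exact lt_irrefl _ h
  have htrans : ∀ a b c : Σ i, V i,
      OSrel chain a b → OSrel chain b c → OSrel chain a c := by
    rintro a b c (⟨i, x, y, hD, rfl, rfl⟩ | h) hbc
    · rcases hbc with ⟨j, y', z, hD', h1, rfl⟩ | h'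
      · obtain ⟨rfl, hy⟩ := Sigma.mk.inj_iff.mp h1
        obtain rfl := eq_of_heq hy
        exact Or.inl ⟨i, x, z, lt_trans hD hD', rfl, rfl⟩
      · exact Or.inr h'
    · rcases hbc with ⟨j, y', z, hD', rfl, rfl⟩ | h'
      · exact Or.inr h
      · exact Or.inr (lt_trans h h')
  letI : DecidableRel (OSrel chain) := fun a b => Classical.dec _
  haveI : IsTrichotomous _ (OSrel chain) := ⟨fun a b hab hba => by
    rcases tri a b with h | h | h
    exacts [absurd h hab, h, absurd h hba]⟩
  haveI : IsIrrefl _ (OSrel chain) := ⟨irr⟩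
  haveI : IsTrans _ (OSrel chain) := ⟨fun a b c => htrans a b c⟩
  haveI : IsStrictOrder _ (OSrel chain) := {}
  haveI : IsStrictTotalOrder _ (OSrel chain) := {}
  letI lo : LinearOrder (Σ i, V i) := linearOrderOfSTO (OSrel chain)
  let w := (Fintype.orderIsoFinOfCardEq (Σ i, V i) rfl).symm
  have hOSlin : eulerianPoly (Σ i, V i) (OSrel chain) = qFact (Fintype.card (Σ i, V i)) := by
    refine euler_linear _ w.toEquiv fun a b => ?_
    exact Iff.symm w.lt_iff_lt
  have h1 := euler_OS D
  have h2 := euler_OS chain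
  rw [hOSlin, Finset.prod_congr rfl fun i _ => hA i] at h2
  show eulerianPoly (Σ i, V i) (OSrel D) * ∏ i, qFact (Fintype.card (V i)) = _
  rw [h1, h2]
  ring
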